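/- For an odd prime p, the automorphisms of G_p of the form b ↦ b, a ↦ b^{mp}a (m in Z/p) are inner automorphisms. -/

import Mathlib

set_option linter.unusedSectionVars false

def Gp (p : ℕ) : Type := ZMod (p ^ 2) × ZMod p

namespace Gp

variable {p : ℕ} [NeZero p]

/-- `(p+1)^a` in `ZMod (p^2)`, computed as `1 + p·a`. -/
def u (a : ZMod p) : ZMod (p ^ 2) := 1 + (p : ZMod (p ^ 2)) * (a.val : ZMod (p ^ 2))

lemma p_mul_p : (p : ZMod (p ^ 2)) * (p : ZMod (p ^ 2)) = 0 := by
  rw [← Nat.cast_mul, show p * p = p ^ 2 by ring, ZMod.natCast_self]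

lemma pmul_mod (x : ℕ) :
    (p : ZMod (p ^ 2)) * ((x % p : ℕ) : ZMod (p ^ 2)) = (p : ZMod (p ^ 2)) * x := by
  conv_rhs => rw [← Nat.div_add_mod x p]
  push_cast
  linear_combination (-(x / p : ℕ) : ZMod (p ^ 2)) * p_mul_p (p := p)

lemma u_add (a b : ZMod p) : u (a + b) = u a * u b := by
  unfold u
  rw [ZMod.val_add, pmul_mod]
  push_cast
  linear_combination (-(a.val : ZMod (p ^ 2)) * (b.val : ZMod (p ^ 2))) * p_mul_p (p := p)

lemma u_zero : u (0 : ZMod p) = 1 := by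
  unfold u
  rw [ZMod.val_zero]
  push_cast
  ring

private def gmul (x y : Gp p) : Gp p := (x.1 + u x.2 * y.1, x.2 + y.2)

private def ginv (x : Gp p) : Gp p := (-(u (-x.2) * x.1), -x.2)

private def gone : Gp p := ((0 : ZMod (p ^ 2)), (0 : ZMod p))

instance : Group (Gp p) where
  mul := gmul
  one := gone
  inv := ginv
  mul_assoc x y z := by
    show gmul (gmul x y) z = gmul x (gmul y z)
    unfold gmul
    refine Prod.ext ?_ ?_ <;> dsimp
    · rw [u_add]; ring
    · ring
  one_mul x := by
    show gmul gone x = x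
    unfold gmul gone
    refine Prod.ext ?_ ?_ <;> dsimp
    · rw [u_zero]; ring
    · ring
  mul_one x := by
    show gmul x gone = x
    unfold gmul gone
    refine Prod.ext ?_ ?_ <;> dsimp <;> ring
  inv_mul_cancel x := by
    show gmul (ginv x) x = gone
    unfold gmul ginv gone
    refine Prod.ext ?_ ?_ <;> dsimp <;> ring

/-- the generator `a` of order `p`. -/
def a (p : ℕ) : Gp p := ((0 : ZMod (p ^ 2)), (1 : ZMod p))

/-- the generator `b` of order `p^2`. -/
def b (p : ℕ) : Gp p := ((1 : ZMod (p ^ 2)), (0 : ZMod p))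

end Gp

section Aux

variable {p : ℕ} [NeZero p]

lemma gp_mul_def (x y : Gp p) :
    x * y = ((x.1 + Gp.u x.2 * y.1, x.2 + y.2) : ZMod (p ^ 2) × ZMod p) := rfl

lemma gp_inv_def (x : Gp p) :
    x⁻¹ = ((-(Gp.u (-x.2) * x.1), -x.2) : ZMod (p ^ 2) × ZMod p) := rfl

lemma gp_b_pow (n : ℕ) :
    (Gp.b p) ^ n = (((n : ZMod (p ^ 2)), (0 : ZMod p)) : ZMod (p ^ 2) × ZMod p) := by
  induction n with
  | zero => rw [pow_zero]; show ((0 : ZMod (p ^ 2)), (0 : ZMod p)) = _; push_cast; rfl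
  | succ k ih =>
    rw [pow_succ, gp_mul_def, ih]
    show ((k : ZMod (p ^ 2)) + Gp.u 0 * 1, (0 : ZMod p) + 0) = _
    rw [Gp.u_zero]
    push_cast
    refine Prod.ext ?_ ?_ <;> dsimp <;> ring

lemma gp_a_pow (n : ℕ) :
    (Gp.a p) ^ n = (((0 : ZMod (p ^ 2)), (n : ZMod p)) : ZMod (p ^ 2) × ZMod p) := by
  induction n with
  | zero => rw [pow_zero]; show ((0 : ZMod (p ^ 2)), (0 : ZMod p)) = _; push_cast; rfl
  | succ k ih =>
    rw [pow_succ, gp_mul_def, ih]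
    show ((0 : ZMod (p ^ 2)) + Gp.u (k : ZMod p) * 0, ((k : ZMod p) + 1)) = _
    push_cast
    refine Prod.ext ?_ ?_ <;> dsimp <;> ring

lemma gp_decomp (x : Gp p) :
    x = Gp.b p ^ (x.1.val) * Gp.a p ^ (x.2.val) := by
  haveI : NeZero (p ^ 2) := ⟨pow_ne_zero 2 (NeZero.ne p)⟩
  rw [gp_mul_def, gp_b_pow, gp_a_pow]
  show x = ((x.1.val : ZMod (p ^ 2)) + Gp.u 0 * 0, (0 : ZMod p) + (x.2.val : ZMod p))
  rw [ZMod.natCast_val, ZMod.natCast_val, ZMod.cast_id, ZMod.cast_id]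
  refine Prod.ext ?_ ?_ <;> dsimp <;> ring

end Aux

/-- For an odd prime `p`, the automorphisms of `G_p` of the form `b ↦ b`,
`a ↦ b^{mp} a` (with `m ∈ Z/p`) are inner automorphisms. -/
theorem gp_aut_inner (p : ℕ) (hp : p.Prime) (hodd : Odd p) [NeZero p]
    (m : ZMod p) (f : MulAut (Gp p))
    (hb : f (Gp.b p) = Gp.b p)
    (ha : f (Gp.a p) = Gp.b p ^ (m.val * p) * Gp.a p) :
    ∃ g : Gp p, f = MulAut.conj g := by
  haveI : Fact (1 < p) := ⟨hp.one_lt⟩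
  set g : Gp p := (((-(m.val : ℕ) : ZMod (p ^ 2)), (0 : ZMod p)) : ZMod (p ^ 2) × ZMod p)
    with hg
  have hu1 : Gp.u (1 : ZMod p) = 1 + (p : ZMod (p ^ 2)) := by
    unfold Gp.u
    rw [ZMod.val_one]
    push_cast
    ring
  have hcb : MulAut.conj g (Gp.b p) = Gp.b p := by
    show g * Gp.b p * g⁻¹ = Gp.b p
    rw [gp_mul_def, gp_mul_def, gp_inv_def]
    show ((-(m.val : ℕ) : ZMod (p ^ 2)) + Gp.u 0 * 1 + Gp.u (0 + 0)
        * (-(Gp.u (-(0 : ZMod p)) * (-(m.val : ℕ) : ZMod (p ^ 2)))), _) = ((1 : ZMod (p ^ 2)), (0 : ZMod p))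
    rw [show ((0 : ZMod p) + 0) = 0 by ring, show (-(0 : ZMod p)) = 0 by ring, Gp.u_zero]
    refine Prod.ext ?_ ?_ <;> simp [Gp.b] <;> rfl
  have hca : MulAut.conj g (Gp.a p) = Gp.b p ^ (m.val * p) * Gp.a p := by
    show g * Gp.a p * g⁻¹ = _
    rw [gp_mul_def, gp_mul_def, gp_mul_def, gp_inv_def, gp_b_pow]
    show ((-(m.val : ℕ) : ZMod (p ^ 2)) + Gp.u 0 * 0 + Gp.u (0 + 1)
        * (-(Gp.u (-(0 : ZMod p)) * (-(m.val : ℕ) : ZMod (p ^ 2)))), ((0 : ZMod p) + 1 + -(0 : ZMod p)))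
      = (((m.val * p : ℕ) : ZMod (p ^ 2)) + Gp.u 0 * 0, (0 : ZMod p) + 1)
    rw [show ((0 : ZMod p) + 1) = 1 by ring, show (-(0 : ZMod p)) = 0 by ring, Gp.u_zero, hu1]
    push_cast
    refine Prod.ext ?_ ?_ <;> dsimp <;> ring
  refine ⟨g, ?_⟩
  ext x
  rw [gp_decomp x, map_mul, map_mul, map_pow, map_pow, map_pow, map_pow, hb, ha, hcb, hca]
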